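/- Fix ε ∈ ℝ and let f : ℝ² → ℝ be f(x,y) = (ε/2)(x² + y²) + (1/2)(x²y + y³) (the D₄⁺ flat-umbilic family). Then: (i) f_xx(x,y)·f_yy(x,y) − f_xy(x,y)² = 0 if and only if (3y + 2ε)² − 3x² = ε² (for ε ≠ 0, a hyperbola: the parabolic curve); (ii) with a^f(x,y,p) = f_xx + 2f_xy·p + f_yy·p² = (ε + y) + 2xp + (ε + 3y)p² and I(x,y,p) = (a^f)_x + p·(a^f)_y, one has I(x,y,p) = 3p(1 + p²), and the set {(x,y) ∈ ℝ² : ∃ p ∈ ℝ, a^f(x,y,p) = 0 and I(x,y,p) = 0} is exactly the line {y = −ε} (the real flecnodal curve); (iii) this line meets the curve (3y + 2ε)² − 3x² = ε² in exactly one point, (0, −ε) (the godron). -/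

import Mathlib

noncomputable section

/-- Partial derivative in the first variable of a function on `ℝ × ℝ`. -/
def pdx (f : ℝ × ℝ → ℝ) (q : ℝ × ℝ) : ℝ := deriv (fun t => f (t, q.2)) q.1

/-- Partial derivative in the second variable of a function on `ℝ × ℝ`. -/
def pdy (f : ℝ × ℝ → ℝ) (q : ℝ × ℝ) : ℝ := deriv (fun t => f (q.1, t)) q.2

/-- Partial derivative in `x` of a function on `ℝ × ℝ × ℝ` (coordinates `(x, y, p)`). -/
def pDx (F : ℝ × ℝ × ℝ → ℝ) (q : ℝ × ℝ × ℝ) : ℝ := deriv (fun t => F (t, q.2.1, q.2.2)) q.1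

/-- Partial derivative in `y` of a function on `ℝ × ℝ × ℝ` (coordinates `(x, y, p)`). -/
def pDy (F : ℝ × ℝ × ℝ → ℝ) (q : ℝ × ℝ × ℝ) : ℝ := deriv (fun t => F (q.1, t, q.2.2)) q.2.1

/-- Partial derivative in `p` of a function on `ℝ × ℝ × ℝ` (coordinates `(x, y, p)`). -/
def pDp (F : ℝ × ℝ × ℝ → ℝ) (q : ℝ × ℝ × ℝ) : ℝ := deriv (fun t => F (q.1, q.2.1, t)) q.2.2

/-- The asymptotic IDE function `a^f(x,y,p) = f_xx + 2 f_xy p + f_yy p²`. -/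
def aIDE (f : ℝ × ℝ → ℝ) (q : ℝ × ℝ × ℝ) : ℝ :=
  pdx (pdx f) (q.1, q.2.1) + 2 * pdy (pdx f) (q.1, q.2.1) * q.2.2
    + pdy (pdy f) (q.1, q.2.1) * q.2.2 ^ 2

/-- The inflection function `I^F(x,y,p) = F_x + p·F_y`; its zero set is the flec-surface. -/
def inflFun (F : ℝ × ℝ × ℝ → ℝ) (q : ℝ × ℝ × ℝ) : ℝ := pDx F q + q.2.2 * pDy F q

/-- Theorem 5(b), the `D₄⁺` flat-umbilic family: for
`f(x,y) = (ε/2)(x² + y²) + (1/2)(x²y + y³)`: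
(i) the parabolic curve is `(3y + 2ε)² − 3x² = ε²`;
(ii) `a^f(x,y,p) = (ε + y) + 2xp + (ε + 3y)p²`, the inflection function is
`I = 3p(1 + p²)`, and the real flecnodal curve is the line `{y = −ε}`;
(iii) this line meets the parabolic curve exactly at the godron `(0, −ε)`. -/
theorem D4plus_flat_umbilic (ε : ℝ)
    (f : ℝ × ℝ → ℝ)
    (hf : ∀ x y : ℝ, f (x, y) =
      ε / 2 * (x ^ 2 + y ^ 2) + 1 / 2 * (x ^ 2 * y + y ^ 3)) :
    (∀ x y : ℝ,
      (pdx (pdx f) (x, y) * pdy (pdy f) (x, y) - (pdy (pdx f) (x, y)) ^ 2 = 0 ↔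
        (3 * y + 2 * ε) ^ 2 - 3 * x ^ 2 = ε ^ 2)) ∧
    (∀ x y p : ℝ, aIDE f (x, y, p) = (ε + y) + 2 * x * p + (ε + 3 * y) * p ^ 2) ∧
    (∀ x y p : ℝ, inflFun (aIDE f) (x, y, p) = 3 * p * (1 + p ^ 2)) ∧
    ({q : ℝ × ℝ | ∃ p : ℝ, aIDE f (q.1, q.2, p) = 0 ∧
        inflFun (aIDE f) (q.1, q.2, p) = 0} = {q : ℝ × ℝ | q.2 = -ε}) ∧
    ({q : ℝ × ℝ | q.2 = -ε ∧ (3 * q.2 + 2 * ε) ^ 2 - 3 * q.1 ^ 2 = ε ^ 2} =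
        {((0 : ℝ), -ε)}) := by

  -- explicit first partial derivatives
  have hfx : ∀ x y : ℝ, pdx f (x, y) = ε * x + x * y := by
    intro x y
    show deriv (fun t => f (t, y)) x = ε * x + x * y
    have hfun : (fun t => f (t, y)) =
        fun t => ε / 2 * (t ^ 2 + y ^ 2) + 1 / 2 * (t ^ 2 * y + y ^ 3) :=
      funext fun t => hf t y
    rw [hfun]
    have h2 : HasDerivAt (fun t : ℝ => t ^ 2) (2 * x ^ 1) x := by
      simpa using hasDerivAt_pow 2 x
    have H := ((h2.add_const (y ^ 2)).const_mul (ε / 2)).add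
      (((h2.mul_const y).add_const (y ^ 3)).const_mul (1 / 2))
    exact H.deriv.trans (by ring)
  have hfy : ∀ x y : ℝ, pdy f (x, y) = ε * y + 1 / 2 * x ^ 2 + 3 / 2 * y ^ 2 := by
    intro x y
    show deriv (fun t => f (x, t)) y = _
    have hfun : (fun t => f (x, t)) =
        fun t => ε / 2 * (x ^ 2 + t ^ 2) + 1 / 2 * (x ^ 2 * t + t ^ 3) :=
      funext fun t => hf x t
    rw [hfun]
    have h2 : HasDerivAt (fun t : ℝ => t ^ 2) (2 * y ^ 1) y := by
      simpa using hasDerivAt_pow 2 y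
    have h3 : HasDerivAt (fun t : ℝ => t ^ 3) (3 * y ^ 2) y := by
      simpa using hasDerivAt_pow 3 y
    have H := ((h2.const_add (x ^ 2)).const_mul (ε / 2)).add
      ((((hasDerivAt_id' y).const_mul (x ^ 2)).add h3).const_mul (1 / 2))
    exact H.deriv.trans (by ring)
  -- second partial derivatives
  have hfxx : ∀ x y : ℝ, pdx (pdx f) (x, y) = ε + y := by
    intro x y
    show deriv (fun t => pdx f (t, y)) x = _
    have hfun : (fun t => pdx f (t, y)) = fun t => ε * t + t * y :=
      funext fun t => hfx t y
    rw [hfun]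
    have H := (((hasDerivAt_id' x).const_mul ε).add ((hasDerivAt_id' x).mul_const y))
    exact H.deriv.trans (by ring)
  have hfxy : ∀ x y : ℝ, pdy (pdx f) (x, y) = x := by
    intro x y
    show deriv (fun t => pdx f (x, t)) y = _
    have hfun : (fun t => pdx f (x, t)) = fun t => ε * x + x * t :=
      funext fun t => hfx x t
    rw [hfun]
    have H := ((hasDerivAt_id' y).const_mul x).const_add (ε * x)
    rw [H.deriv]; ring
  have hfyy : ∀ x y : ℝ, pdy (pdy f) (x, y) = ε + 3 * y := by
    intro x y
    show deriv (fun t => pdy f (x, t)) y = _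
    have hfun : (fun t => pdy f (x, t)) =
        fun t => ε * t + 1 / 2 * x ^ 2 + 3 / 2 * t ^ 2 :=
      funext fun t => hfy x t
    rw [hfun]
    have h2 : HasDerivAt (fun t : ℝ => t ^ 2) (2 * y ^ 1) y := by
      simpa using hasDerivAt_pow 2 y
    have H := (((hasDerivAt_id' y).const_mul ε).add_const (1 / 2 * x ^ 2)).add
      (h2.const_mul (3 / 2))
    exact H.deriv.trans (by ring)
  -- the asymptotic IDE function
  have haIDE : ∀ x y p : ℝ,
      aIDE f (x, y, p) = (ε + y) + 2 * x * p + (ε + 3 * y) * p ^ 2 := by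
    intro x y p
    show pdx (pdx f) (x, y) + 2 * pdy (pdx f) (x, y) * p
        + pdy (pdy f) (x, y) * p ^ 2 = _
    rw [hfxx, hfxy, hfyy]
  -- partials of aIDE
  have hax : ∀ x y p : ℝ, pDx (aIDE f) (x, y, p) = 2 * p := by
    intro x y p
    show deriv (fun t => aIDE f (t, y, p)) x = _
    have hfun : (fun t => aIDE f (t, y, p)) =
        fun t => (ε + y) + 2 * t * p + (ε + 3 * y) * p ^ 2 :=
      funext fun t => haIDE t y p
    rw [hfun]
    have H := ((((hasDerivAt_id' x).const_mul 2).mul_const p).const_add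
      (ε + y)).add_const ((ε + 3 * y) * p ^ 2)
    rw [H.deriv]; ring
  have hay : ∀ x y p : ℝ, pDy (aIDE f) (x, y, p) = 1 + 3 * p ^ 2 := by
    intro x y p
    show deriv (fun t => aIDE f (x, t, p)) y = _
    have hfun : (fun t => aIDE f (x, t, p)) =
        fun t => (ε + t) + 2 * x * p + (ε + 3 * t) * p ^ 2 :=
      funext fun t => haIDE x t p
    rw [hfun]
    have H := (((hasDerivAt_id' y).const_add ε).add_const (2 * x * p)).add
      ((((hasDerivAt_id' y).const_mul 3).const_add ε).mul_const (p ^ 2))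
    exact H.deriv.trans (by ring)
  have hI : ∀ x y p : ℝ, inflFun (aIDE f) (x, y, p) = 3 * p * (1 + p ^ 2) := by
    intro x y p
    show pDx (aIDE f) (x, y, p) + p * pDy (aIDE f) (x, y, p) = _
    rw [hax, hay]; ring
  refine ⟨?_, haIDE, hI, ?_, ?_⟩
  · intro x y
    rw [hfxx, hfyy, hfxy]
    constructor
    · intro h; linear_combination 3 * h
    · intro h; linear_combination (1 / 3) * h
  · ext ⟨a, b⟩
    simp only [Set.mem_setOf_eq]
    constructor
    · rintro ⟨p, h1, h2⟩
      rw [hI] at h2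
      have hp : p = 0 := by
        rcases mul_eq_zero.mp h2 with h | h
        · rcases mul_eq_zero.mp h with h' | h'
          · norm_num at h'
          · exact h'
        · nlinarith [sq_nonneg p]
      rw [haIDE, hp] at h1
      have : ε + b = 0 := by linarith [h1]; 
      linarith
    · intro hb
      refine ⟨0, ?_, ?_⟩
      · rw [haIDE, hb]; ring
      · rw [hI]; ring
  · ext ⟨a, b⟩
    simp only [Set.mem_setOf_eq, Set.mem_singleton_iff, Prod.mk.injEq]
    constructor
    · rintro ⟨hb, h⟩
      subst hb
      have h2 : a ^ 2 = 0 := by linear_combination (-1 / 3) * h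
      exact ⟨pow_eq_zero_iff (by norm_num) |>.mp h2, rfl⟩
    · rintro ⟨ha, hb⟩
      subst ha; subst hb
      exact ⟨rfl, by ring⟩
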